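/- For every natural number m, as n → ∞ one has ∑_{k=0}^{n} C(2k,k) = (4/3)·C(2n,n)·∑_{j=0}^{m} 3^{-j} / ∏_{i=1}^{j} (2n/(2i−1) − 1) + O(4^n · n^{-m-3/2}), where the j = 0 summand is interpreted as 1 (empty product); equivalently, the function n ↦ ∑_{k=0}^{n} C(2k,k) − (4/3)·C(2n,n)·∑_{j=0}^{m} 3^{-j}/∏_{i=1}^{j}(2n/(2i−1) − 1) is big-O of n ↦ 4^n · n^{-(m+3/2)} as n → ∞. -/

import Mathlib

open Finset Filter Asymptotics Real

noncomputable def cb (k : ℕ) : ℝ := ((2 * k).choose k : ℝ)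

noncomputable def pr (j k : ℕ) : ℝ :=
  ∏ i ∈ Finset.Icc 1 j, (2 * (i : ℝ) - 1) / (2 * (k : ℝ) - 2 * i + 1)

noncomputable def vv (j k : ℕ) : ℝ := cb k * pr j k

lemma odd_ne (a b : ℕ) : (2 * (a : ℝ) - 2 * (b : ℝ) + 1) ≠ 0 := by
  intro h
  have h2 : ((2 * (a : ℤ) - 2 * (b : ℤ) + 1 : ℤ) : ℝ) = 0 := by push_cast; linarith
  have h3 : (2 * (a : ℤ) - 2 * (b : ℤ) + 1 : ℤ) = 0 := by exact_mod_cast h2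
  omega

lemma cb_pos (k : ℕ) : 0 < cb k := by
  have := Nat.choose_pos (show k ≤ 2 * k by omega)
  unfold cb; positivity

lemma cb_succ (k : ℕ) : ((k : ℝ) + 1) * cb (k + 1) = 2 * (2 * k + 1) * cb k := by
  have h := Nat.succ_mul_centralBinom_succ k
  have h2 := congrArg (Nat.cast : ℕ → ℝ) h
  unfold cb
  rw [← Nat.centralBinom_eq_two_mul_choose, ← Nat.centralBinom_eq_two_mul_choose]
  push_cast at h2 ⊢
  linarith

lemma pr_succ (j k : ℕ) :
    pr (j + 1) k = pr j k * ((2 * (j : ℝ) + 1) / (2 * (k : ℝ) - 2 * j - 1)) := by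
  unfold pr
  rw [Finset.prod_Icc_succ_top (by omega : 1 ≤ j + 1)]
  push_cast
  ring

lemma pr_ratio (j k : ℕ) :
    (2 * (k : ℝ) + 1) * pr j (k + 1) = (2 * (k : ℝ) - 2 * j + 1) * pr j k := by
  induction j with
  | zero => simp [pr]
  | succ j ih =>
    rw [pr_succ, pr_succ]
    have h1 : (2 * (k : ℝ) - 2 * j + 1) ≠ 0 := odd_ne k j
    have h2 : (2 * (k : ℝ) - 2 * (j:ℝ) - 1) ≠ 0 := by
      have := odd_ne k (j + 1); push_cast at this; intro h; apply this; linarith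
    have h3 : (2 * ((k:ℝ) + 1) - 2 * (j:ℝ) - 1) = 2 * (k : ℝ) - 2 * j + 1 := by ring
    push_cast
    rw [h3]
    linear_combination (2 * (j : ℝ) + 1) * (2 * (k : ℝ) - 2 * j + 1)⁻¹ * ih
      + pr j k * (2 * (j : ℝ) + 1) * mul_inv_cancel₀ h1
      - pr j k * (2 * (j : ℝ) + 1) * mul_inv_cancel₀ h2

lemma vv_step (j k : ℕ) :
    ((k : ℝ) + 1) * vv j (k + 1) = (4 * (k : ℝ) - 4 * j + 2) * vv j k := by
  have h : (2 * (k : ℝ) + 1) ≠ 0 := by positivity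
  apply mul_right_cancel₀ h
  unfold vv
  have e1 : ((k : ℝ) + 1) * (cb (k+1) * pr j (k+1)) * (2 * (k:ℝ) + 1)
      = (((k:ℝ)+1) * cb (k+1)) * ((2*(k:ℝ)+1) * pr j (k+1)) := by ring
  rw [e1, cb_succ, pr_ratio]
  ring

lemma key (j k : ℕ) : 4 * vv j k - vv j (k + 1) = vv (j + 1) (k + 1) := by
  have hs := vv_step j k
  have hp : vv (j+1) (k+1) = vv j (k+1) * ((2 * (j : ℝ) + 1) / (2 * (k : ℝ) + 1 - 2 * j)) := by
    unfold vv
    rw [pr_succ]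
    have : (2 * ((k:ℝ)+1) - 2 * (j:ℝ) - 1) = 2 * (k : ℝ) + 1 - 2 * j := by ring
    push_cast
    rw [this]
    ring
  have h1 : (2 * (k : ℝ) + 1 - 2 * (j:ℝ)) ≠ 0 := by
    have := odd_ne k j; intro h; apply this; linarith
  have h2 : ((k : ℝ) + 1) ≠ 0 := by positivity
  rw [hp, mul_div_assoc', eq_div_iff h1]
  linear_combination (-2 : ℝ) * hs

noncomputable def Ssum (n : ℕ) : ℝ := ∑ k ∈ Finset.range (n + 1), cb k

noncomputable def T (m n : ℕ) : ℝ :=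
  (4 / 3) * ∑ j ∈ Finset.range (m + 1), ((3 : ℝ)⁻¹) ^ j * vv j n

lemma vv_zero (n : ℕ) : vv 0 n = cb n := by
  simp [vv, pr]

lemma step_eq (m k : ℕ) :
    cb (k + 1) - (4 / 3) * ∑ j ∈ Finset.range (m + 1),
      ((3 : ℝ)⁻¹) ^ j * (vv j (k + 1) - vv j k)
    = ((3 : ℝ)⁻¹) ^ (m + 1) * vv (m + 1) (k + 1) := by
  induction m with
  | zero =>
    rw [Finset.sum_range_one]
    linear_combination (1 / 3 : ℝ) * key 0 k - vv_zero (k + 1)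
  | succ m ih =>
    rw [Finset.sum_range_succ, mul_add]
    have hk := key (m + 1) k
    linear_combination ih + ((3:ℝ)⁻¹ ^ (m+1) / 3) * hk

lemma sum_eq (m n : ℕ) :
    Ssum n - T m n = (Ssum 0 - T m 0)
      + ((3 : ℝ)⁻¹) ^ (m + 1) * ∑ k ∈ Finset.Icc 1 n, vv (m + 1) k := by
  induction n with
  | zero =>
    rw [show Finset.Icc 1 0 = (∅ : Finset ℕ) from rfl, Finset.sum_empty]
    ring
  | succ n ih =>
    have hS : Ssum (n + 1) = Ssum n + cb (n + 1) := by
      unfold Ssum; rw [Finset.sum_range_succ]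
    have hT : T m (n + 1) - T m n
        = (4 / 3) * ∑ j ∈ Finset.range (m + 1), ((3 : ℝ)⁻¹) ^ j * (vv j (n + 1) - vv j n) := by
      unfold T
      rw [← mul_sub, ← Finset.sum_sub_distrib]
      congr 1
      apply Finset.sum_congr rfl
      intro j _
      ring
    have hstep := step_eq m n
    rw [Finset.sum_Icc_succ_top (by omega : 1 ≤ n + 1), mul_add]
    linear_combination ih + hstep - hT + hS

lemma cb_eq (n : ℕ) : cb n = (Nat.centralBinom n : ℝ) := by
  rw [cb, Nat.centralBinom_eq_two_mul_choose]

lemma cbsq (n : ℕ) : Nat.centralBinom n ^ 2 * (3 * n + 1) ≤ 16 ^ n := by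
  induction n with
  | zero => simp [Nat.centralBinom]
  | succ n ih =>
    have h := Nat.succ_mul_centralBinom_succ n
    have hkey : (2 * (2 * n + 1)) ^ 2 * (3 * (n + 1) + 1) ≤ 16 * (n + 1) ^ 2 * (3 * n + 1) := by
      nlinarith
    have h2 : (n + 1) ^ 2 * (Nat.centralBinom (n + 1) ^ 2 * (3 * (n + 1) + 1))
        ≤ (n + 1) ^ 2 * 16 ^ (n + 1) := by
      calc (n + 1) ^ 2 * (Nat.centralBinom (n + 1) ^ 2 * (3 * (n + 1) + 1))
          = ((n + 1) * Nat.centralBinom (n + 1)) ^ 2 * (3 * (n + 1) + 1) := by ring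
        _ = (2 * (2 * n + 1)) ^ 2 * Nat.centralBinom n ^ 2 * (3 * (n + 1) + 1) := by
            rw [h]; ring
        _ ≤ 16 * (n + 1) ^ 2 * (3 * n + 1) * Nat.centralBinom n ^ 2 := by
            nlinarith [Nat.centralBinom n ^ 2, hkey]
        _ = 16 * (n + 1) ^ 2 * (Nat.centralBinom n ^ 2 * (3 * n + 1)) := by ring
        _ ≤ 16 * (n + 1) ^ 2 * 16 ^ n := by
            exact Nat.mul_le_mul_left _ ih
        _ = (n + 1) ^ 2 * 16 ^ (n + 1) := by ring
    exact Nat.le_of_mul_le_mul_left h2 (by positivity)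

lemma cb_le (n : ℕ) (hn : 1 ≤ n) : cb n ≤ 4 ^ n * (n : ℝ) ^ (-(1 / 2) : ℝ) := by
  have hn0 : (0 : ℝ) < n := by exact_mod_cast hn
  have h1 : cb n ^ 2 * (n : ℝ) ≤ 16 ^ n := by
    have := cbsq n
    have h2 : ((Nat.centralBinom n ^ 2 * (3 * n + 1) : ℕ) : ℝ) ≤ ((16 ^ n : ℕ) : ℝ) := by
      exact_mod_cast this
    push_cast at h2
    rw [cb_eq]
    nlinarith [sq_nonneg ((Nat.centralBinom n : ℝ))]
  have hx : (0 : ℝ) < (n : ℝ) ^ ((1 / 2) : ℝ) := Real.rpow_pos_of_pos hn0 _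
  rw [show (-(1/2) : ℝ) = -(1/2) from rfl, Real.rpow_neg hn0.le, ← div_eq_mul_inv,
    le_div_iff₀ hx]
  have hsq : (cb n * (n : ℝ) ^ ((1 / 2) : ℝ)) ^ 2 ≤ ((4 : ℝ) ^ n) ^ 2 := by
    have hxx : ((n : ℝ) ^ ((1 / 2) : ℝ)) ^ 2 = (n : ℝ) := by
      rw [← Real.rpow_natCast ((n : ℝ) ^ ((1 / 2) : ℝ)) 2, ← Real.rpow_mul hn0.le]
      norm_num
    calc (cb n * (n : ℝ) ^ ((1 / 2) : ℝ)) ^ 2 = cb n ^ 2 * ((n : ℝ) ^ ((1/2):ℝ)) ^ 2 := by ring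
      _ = cb n ^ 2 * (n : ℝ) := by rw [hxx]
      _ ≤ 16 ^ n := h1
      _ = ((4 : ℝ) ^ 2) ^ n := by norm_num
      _ = ((4 : ℝ) ^ n) ^ 2 := by rw [← pow_mul, ← pow_mul, mul_comm]
  have h4 : (0 : ℝ) ≤ 4 ^ n := by positivity
  have h5 : (0 : ℝ) ≤ cb n * (n : ℝ) ^ ((1 / 2) : ℝ) := mul_nonneg (cb_pos n).le hx.le
  nlinarith [hsq, h4, h5]

lemma pr_pos (j k : ℕ) (h : j ≤ k) : 0 < pr j k := by
  apply Finset.prod_pos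
  intro i hi
  rw [Finset.mem_Icc] at hi
  have h1 : (1 : ℝ) ≤ (i : ℝ) := by exact_mod_cast hi.1
  have h2 : (i : ℝ) ≤ (k : ℝ) := by exact_mod_cast le_trans hi.2 h
  apply div_pos <;> linarith

lemma vv_pos (j k : ℕ) (h : j ≤ k) : 0 < vv j k := mul_pos (cb_pos k) (pr_pos j k h)

lemma vv_double (m k : ℕ) (h : 2 * m + 2 ≤ k) : 2 * vv (m + 1) k ≤ vv (m + 1) (k + 1) := by
  have hs := vv_step (m + 1) k
  have hp := vv_pos (m + 1) k (by omega)
  have hc : (2 * (m : ℝ) + 2) ≤ (k : ℝ) := by exact_mod_cast h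
  push_cast at hs
  nlinarith [mul_nonneg (by linarith : (0:ℝ) ≤ 2 * (k:ℝ) - 4 * m - 4) hp.le]

lemma tail_le (m : ℕ) : ∀ n, 2 * m + 2 ≤ n →
    ∑ k ∈ Finset.Icc (2 * m + 2) n, vv (m + 1) k ≤ 2 * vv (m + 1) n := by
  intro n hn
  induction n, hn using Nat.le_induction with
  | base =>
    rw [Finset.Icc_self, Finset.sum_singleton]
    nlinarith [vv_pos (m + 1) (2 * m + 2) (by omega)]
  | succ n hn ih =>
    rw [Finset.sum_Icc_succ_top (by omega : 2 * m + 2 ≤ n + 1)]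
    have := vv_double m n hn
    linarith

lemma vv_le (m n : ℕ) (h : 2 * m + 2 ≤ n) :
    vv (m + 1) n ≤ (∏ i ∈ Finset.Icc 1 (m + 1), (2 * (i : ℝ) - 1)) *
      (4 ^ n * (n : ℝ) ^ (-(m : ℝ) - 3 / 2)) := by
  have hn0 : (0 : ℝ) < n := by
    have : (1 : ℕ) ≤ n := by omega
    exact_mod_cast this
  have hpr : pr (m + 1) n ≤
      (∏ i ∈ Finset.Icc 1 (m + 1), (2 * (i : ℝ) - 1)) * ((n : ℝ)⁻¹) ^ (m + 1) := by
    have hrw : (∏ i ∈ Finset.Icc 1 (m + 1), (2 * (i : ℝ) - 1)) * ((n : ℝ)⁻¹) ^ (m + 1)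
        = ∏ i ∈ Finset.Icc 1 (m + 1), ((2 * (i : ℝ) - 1) * (n : ℝ)⁻¹) := by
      rw [Finset.prod_mul_distrib, Finset.prod_const, Nat.card_Icc]
      norm_num
    rw [hrw]
    apply Finset.prod_le_prod
    · intro i hi
      rw [Finset.mem_Icc] at hi
      have h1 : (1 : ℝ) ≤ (i : ℝ) := by exact_mod_cast hi.1
      have h2 : (i : ℝ) ≤ (n : ℝ) := by
        have : i ≤ n := by omega
        exact_mod_cast this
      have h3 : (0:ℝ) < 2 * (n : ℝ) - 2 * i + 1 := by linarith
      have h4 : (0:ℝ) ≤ 2 * (i : ℝ) - 1 := by linarith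
      exact div_nonneg h4 h3.le
    · intro i hi
      rw [Finset.mem_Icc] at hi
      have h1 : (1 : ℝ) ≤ (i : ℝ) := by exact_mod_cast hi.1
      have h2 : (n : ℝ) ≤ 2 * (n : ℝ) - 2 * i + 1 := by
        have : 2 * i ≤ n + 1 := by omega
        have hc : (2 * (i : ℝ)) ≤ (n : ℝ) + 1 := by exact_mod_cast this
        linarith
      rw [show (2 * (i:ℝ) - 1) * (n:ℝ)⁻¹ = (2 * (i:ℝ) - 1) / (n:ℝ) from (div_eq_mul_inv _ _).symm]
      gcongr <;> linarith
  have hcb := cb_le n (by omega)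
  have hpr0 : 0 ≤ pr (m + 1) n := (pr_pos _ _ (by omega)).le
  have hn0' : (0:ℝ) ≤ (n:ℝ) := hn0.le
  have e1 : ((n:ℝ)⁻¹) ^ (m + 1) = (n:ℝ) ^ (-((m:ℝ) + 1)) := by
    rw [inv_pow, ← Real.rpow_natCast (n:ℝ) (m + 1), ← Real.rpow_neg hn0.le]
    congr 1
    push_cast
    ring
  have e2 : (n:ℝ) ^ (-(1/2) : ℝ) * (n:ℝ) ^ (-((m:ℝ) + 1)) = (n:ℝ) ^ (-(m:ℝ) - 3/2) := by
    rw [← Real.rpow_add hn0]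
    congr 1
    ring
  calc vv (m + 1) n = cb n * pr (m + 1) n := rfl
    _ ≤ (4 ^ n * (n:ℝ) ^ (-(1/2) : ℝ)) *
        ((∏ i ∈ Finset.Icc 1 (m + 1), (2 * (i : ℝ) - 1)) * ((n:ℝ)⁻¹) ^ (m + 1)) := by
        apply mul_le_mul hcb hpr hpr0 (by positivity)
    _ = (∏ i ∈ Finset.Icc 1 (m + 1), (2 * (i : ℝ) - 1)) *
        (4 ^ n * ((n:ℝ) ^ (-(1/2) : ℝ) * ((n:ℝ)⁻¹) ^ (m + 1))) := by ring
    _ = (∏ i ∈ Finset.Icc 1 (m + 1), (2 * (i : ℝ) - 1)) *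
        (4 ^ n * (n : ℝ) ^ (-(m : ℝ) - 3 / 2)) := by rw [e1, e2]

lemma bridge (m n : ℕ) :
    (∑ k ∈ Finset.range (n + 1), ((2 * k).choose k : ℝ)) -
      (4 / 3) * ((2 * n).choose n : ℝ) *
        ∑ j ∈ Finset.range (m + 1),
          (3 : ℝ) ^ (-(j : ℤ)) /
            ∏ i ∈ Finset.Icc 1 j, (2 * (n : ℝ) / (2 * i - 1) - 1)
    = Ssum n - T m n := by
  have h1 : (∑ k ∈ Finset.range (n + 1), ((2 * k).choose k : ℝ)) = Ssum n := rfl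
  rw [h1]
  congr 1
  rw [T, mul_assoc, Finset.mul_sum, Finset.mul_sum, Finset.mul_sum]
  apply Finset.sum_congr rfl
  intro j _
  have hprod : ∏ i ∈ Finset.Icc 1 j, (2 * (n : ℝ) / (2 * i - 1) - 1)
      = ∏ i ∈ Finset.Icc 1 j, (2 * (n : ℝ) - 2 * i + 1) / (2 * (i : ℝ) - 1) := by
    apply Finset.prod_congr rfl
    intro i hi
    rw [Finset.mem_Icc] at hi
    have h1 : (1 : ℝ) ≤ (i : ℝ) := by exact_mod_cast hi.1
    have h2 : (2 * (i : ℝ) - 1) ≠ 0 := by linarith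
    field_simp
    ring
  have hinv : (∏ i ∈ Finset.Icc 1 j, (2 * (n : ℝ) / (2 * i - 1) - 1))⁻¹ = pr j n := by
    rw [hprod, ← Finset.prod_inv_distrib]
    apply Finset.prod_congr rfl
    intro i _
    rw [inv_div]
  have hz : (3 : ℝ) ^ (-(j : ℤ)) = (3 : ℝ)⁻¹ ^ j := by
    rw [zpow_neg, zpow_natCast, ← inv_pow]
  rw [div_eq_mul_inv ((3:ℝ) ^ (-(j : ℤ))), hinv, hz, vv, cb]
  ring

theorem central_binomial_partial_sum_expansion (m : ℕ) :
    (fun n : ℕ =>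
       (∑ k ∈ Finset.range (n + 1), ((2 * k).choose k : ℝ)) -
         (4 / 3) * ((2 * n).choose n : ℝ) *
           ∑ j ∈ Finset.range (m + 1),
             (3 : ℝ) ^ (-(j : ℤ)) /
               ∏ i ∈ Finset.Icc 1 j, (2 * (n : ℝ) / (2 * i - 1) - 1))
      =O[atTop] fun n : ℕ => (4 : ℝ) ^ n * (n : ℝ) ^ (-(m : ℝ) - 3 / 2) := by
  have hfun : (fun n : ℕ =>
       (∑ k ∈ Finset.range (n + 1), ((2 * k).choose k : ℝ)) -
         (4 / 3) * ((2 * n).choose n : ℝ) *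
           ∑ j ∈ Finset.range (m + 1),
             (3 : ℝ) ^ (-(j : ℤ)) /
               ∏ i ∈ Finset.Icc 1 j, (2 * (n : ℝ) / (2 * i - 1) - 1))
      = fun n : ℕ => Ssum n - T m n := funext fun n => bridge m n
  rw [hfun, isBigO_iff]
  have hq : (0 : ℝ) < (3 : ℝ)⁻¹ ^ (m + 1) := by positivity
  have hA0 : (0 : ℝ) ≤ ∏ i ∈ Finset.Icc 1 (m + 1), (2 * (i : ℝ) - 1) := by
    apply Finset.prod_nonneg
    intro i hi
    rw [Finset.mem_Icc] at hi
    have : (1 : ℝ) ≤ (i : ℝ) := by exact_mod_cast hi.1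
    linarith
  refine ⟨|Ssum 0 - T m 0| + (3 : ℝ)⁻¹ ^ (m + 1) * |∑ k ∈ Finset.Icc 1 (2 * m + 1), vv (m + 1) k|
      + (3 : ℝ)⁻¹ ^ (m + 1) * (2 * ∏ i ∈ Finset.Icc 1 (m + 1), (2 * (i : ℝ) - 1)), ?_⟩
  have hlo := isLittleO_pow_const_const_pow_of_one_lt (R := ℝ) (m + 2)
    (by norm_num : (1 : ℝ) < 4)
  have hev1 : ∀ᶠ n : ℕ in atTop, ((n : ℝ)) ^ (m + 2) ≤ 4 ^ n := by
    filter_upwards [isLittleO_iff.mp hlo one_pos] with n hn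
    have h1 : ‖((n : ℝ)) ^ (m + 2)‖ = ((n : ℝ)) ^ (m + 2) := by
      rw [Real.norm_eq_abs]; exact abs_of_nonneg (by positivity)
    have h2 : ‖(4 : ℝ) ^ n‖ = (4 : ℝ) ^ n := by
      rw [Real.norm_eq_abs]; exact abs_of_nonneg (by positivity)
    rw [h1, h2, one_mul] at hn
    exact hn
  filter_upwards [hev1, eventually_ge_atTop (2 * m + 2)] with n hn4 hn
  have hn1 : 1 ≤ n := by omega
  have hn0 : (0 : ℝ) < (n : ℝ) := by exact_mod_cast Nat.lt_of_lt_of_le Nat.zero_lt_one hn1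
  have hg0 : (0 : ℝ) < 4 ^ n * (n : ℝ) ^ (-(m : ℝ) - 3 / 2) := by positivity
  have hg1 : (1 : ℝ) ≤ 4 ^ n * (n : ℝ) ^ (-(m : ℝ) - 3 / 2) := by
    have e1 : (n : ℝ) ^ (-((m : ℝ) + 2)) ≤ (n : ℝ) ^ (-(m : ℝ) - 3 / 2) :=
      Real.rpow_le_rpow_of_exponent_le (by exact_mod_cast hn1) (by linarith)
    have e2 : (n : ℝ) ^ (-((m : ℝ) + 2)) = (((n : ℝ)) ^ (m + 2))⁻¹ := by
      rw [← Real.rpow_natCast (n : ℝ) (m + 2), ← Real.rpow_neg hn0.le]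
      congr 1
      push_cast
      ring
    have hp : (0 : ℝ) < ((n : ℝ)) ^ (m + 2) := by positivity
    calc (1 : ℝ) = ((n : ℝ)) ^ (m + 2) * (((n : ℝ)) ^ (m + 2))⁻¹ :=
          (mul_inv_cancel₀ hp.ne').symm
      _ ≤ 4 ^ n * (((n : ℝ)) ^ (m + 2))⁻¹ :=
          mul_le_mul_of_nonneg_right hn4 (by positivity)
      _ = 4 ^ n * (n : ℝ) ^ (-((m : ℝ) + 2)) := by rw [e2]
      _ ≤ 4 ^ n * (n : ℝ) ^ (-(m : ℝ) - 3 / 2) :=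
          mul_le_mul_of_nonneg_left e1 (by positivity)
  have hsplit : ∑ k ∈ Finset.Icc 1 n, vv (m + 1) k
      = (∑ k ∈ Finset.Icc 1 (2 * m + 1), vv (m + 1) k)
        + ∑ k ∈ Finset.Icc (2 * m + 2) n, vv (m + 1) k := by
    rw [show Finset.Icc 1 n = Finset.Ioc 0 n from Finset.Icc_add_one_left_eq_Ioc 0 n,
      show Finset.Icc 1 (2 * m + 1) = Finset.Ioc 0 (2 * m + 1) from
        Finset.Icc_add_one_left_eq_Ioc 0 (2 * m + 1),
      show Finset.Icc (2 * m + 2) n = Finset.Ioc (2 * m + 1) n from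
        Finset.Icc_add_one_left_eq_Ioc (2 * m + 1) n]
    exact (Finset.sum_Ioc_consecutive _ (Nat.zero_le _) (by omega)).symm
  have htail := tail_le m n hn
  have htail0 : 0 ≤ ∑ k ∈ Finset.Icc (2 * m + 2) n, vv (m + 1) k := by
    apply Finset.sum_nonneg
    intro k hk
    rw [Finset.mem_Icc] at hk
    exact (vv_pos (m + 1) k (by omega)).le
  have hvle := vv_le m n hn
  rw [Real.norm_eq_abs, Real.norm_eq_abs, abs_of_pos hg0, sum_eq m n, hsplit]
  have habs1 : |Ssum 0 - T m 0 + (3 : ℝ)⁻¹ ^ (m + 1) *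
        ((∑ k ∈ Finset.Icc 1 (2 * m + 1), vv (m + 1) k)
          + ∑ k ∈ Finset.Icc (2 * m + 2) n, vv (m + 1) k)|
      ≤ |Ssum 0 - T m 0| + (3 : ℝ)⁻¹ ^ (m + 1) * |∑ k ∈ Finset.Icc 1 (2 * m + 1), vv (m + 1) k|
        + (3 : ℝ)⁻¹ ^ (m + 1) * (∑ k ∈ Finset.Icc (2 * m + 2) n, vv (m + 1) k) := by
    calc |Ssum 0 - T m 0 + (3 : ℝ)⁻¹ ^ (m + 1) * (_ + _)|
        ≤ |Ssum 0 - T m 0| + |(3 : ℝ)⁻¹ ^ (m + 1) *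
            ((∑ k ∈ Finset.Icc 1 (2 * m + 1), vv (m + 1) k)
              + ∑ k ∈ Finset.Icc (2 * m + 2) n, vv (m + 1) k)| := abs_add_le _ _
      _ ≤ _ := by
          rw [abs_mul, abs_of_pos hq]
          have := abs_add_le (∑ k ∈ Finset.Icc 1 (2 * m + 1), vv (m + 1) k)
            (∑ k ∈ Finset.Icc (2 * m + 2) n, vv (m + 1) k)
          rw [abs_of_nonneg htail0] at this
          nlinarith [hq]
  have htail2 : ∑ k ∈ Finset.Icc (2 * m + 2) n, vv (m + 1) k
      ≤ 2 * ((∏ i ∈ Finset.Icc 1 (m + 1), (2 * (i : ℝ) - 1)) *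
          (4 ^ n * (n : ℝ) ^ (-(m : ℝ) - 3 / 2))) := by
    calc ∑ k ∈ Finset.Icc (2 * m + 2) n, vv (m + 1) k ≤ 2 * vv (m + 1) n := htail
      _ ≤ _ := by linarith
  refine le_trans habs1 ?_
  have hc0 : 0 ≤ |Ssum 0 - T m 0| + (3 : ℝ)⁻¹ ^ (m + 1) *
      |∑ k ∈ Finset.Icc 1 (2 * m + 1), vv (m + 1) k| := by positivity
  nlinarith [mul_le_mul_of_nonneg_left hg1 hc0, mul_le_mul_of_nonneg_left htail2 hq.le]
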